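/- The F-algebra homomorphism F[A,B,C,X,Y,Z] → F[x,y,z] determined by A ↦ xz, B ↦ xz², C ↦ x, X ↦ yz, Y ↦ yz², Z ↦ y has kernel exactly the ideal 𝒮̄-ideal ℐ̄, and hence induces an F-algebra isomorphism from 𝒮 = F[A,B,C,X,Y,Z]/ℐ̄ onto the F-subalgebra of F[x,y,z] generated by the six monomials x, xz, xz², y, yz, yz². -/

import Mathlib

open MvPolynomial

/-- The images of the six variables `A, B, C, X, Y, Z` (indexed `0,…,5`) under the map
`A ↦ xz, B ↦ xz², C ↦ x, X ↦ yz, Y ↦ yz², Z ↦ y` (with `x, y, z` the variables `0, 1, 2`). -/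
noncomputable def toricImages (F : Type*) [CommRing F] : Fin 6 → MvPolynomial (Fin 3) F :=
  ![X 0 * X 2, X 0 * X 2 ^ 2, X 0, X 1 * X 2, X 1 * X 2 ^ 2, X 1]

/-- The ideal `ℐ̄` generated by the 2×2 minors of the matrix with rows `(A, B, X, Y)` and
`(C, A, Z, X)`, where `A,B,C,X,Y,Z` are the variables `0,…,5`. -/
noncomputable def minorsIdeal (F : Type*) [CommRing F] : Ideal (MvPolynomial (Fin 6) F) :=
  Ideal.span
    {X 0 ^ 2 - X 1 * X 2, X 0 * X 5 - X 2 * X 3, X 0 * X 3 - X 2 * X 4,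
     X 0 * X 3 - X 1 * X 5, X 0 * X 4 - X 1 * X 3, X 3 ^ 2 - X 4 * X 5}

namespace ToricAux

/-- The exponent vectors of the six monomial images. -/
noncomputable def dd : Fin 6 → (Fin 3 →₀ ℕ)
  | 0 => Finsupp.single 0 1 + Finsupp.single 2 1
  | 1 => Finsupp.single 0 1 + Finsupp.single 2 2
  | 2 => Finsupp.single 0 1
  | 3 => Finsupp.single 1 1 + Finsupp.single 2 1
  | 4 => Finsupp.single 1 1 + Finsupp.single 2 2
  | 5 => Finsupp.single 1 1

/-- The induced map on exponents. -/
noncomputable def ee (m : Fin 6 →₀ ℕ) : Fin 3 →₀ ℕ :=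
  m 0 • dd 0 + m 1 • dd 1 + m 2 • dd 2 + m 3 • dd 3 + m 4 • dd 4 + m 5 • dd 5

/-- Normal-form monomials. -/
def Nml (m : Fin 6 →₀ ℕ) : Prop :=
  m 0 ≤ 1 ∧ m 3 ≤ 1 ∧ (m 0 = 0 ∨ m 3 = 0) ∧ (m 0 = 0 ∨ m 4 = 0) ∧
    (m 0 = 0 ∨ m 5 = 0) ∧ (m 2 = 0 ∨ m 4 = 0)

lemma ee0 (m : Fin 6 →₀ ℕ) : ee m 0 = m 0 + m 1 + m 2 := by
  simp [ee, dd, Finsupp.single_apply]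
lemma ee1 (m : Fin 6 →₀ ℕ) : ee m 1 = m 3 + m 4 + m 5 := by
  simp [ee, dd, Finsupp.single_apply]
lemma ee2 (m : Fin 6 →₀ ℕ) : ee m 2 = m 0 + 2 * m 1 + m 3 + 2 * m 4 := by
  simp [ee, dd, Finsupp.single_apply]; ring

lemma ee_inj : Set.InjOn ee {m | Nml m} := by
  intro m hm m' hm' h
  have h0 : m 0 + m 1 + m 2 = m' 0 + m' 1 + m' 2 := by rw [← ee0, ← ee0, h]
  have h1 : m 3 + m 4 + m 5 = m' 3 + m' 4 + m' 5 := by rw [← ee1, ← ee1, h]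
  have h2 : m 0 + 2 * m 1 + m 3 + 2 * m 4 = m' 0 + 2 * m' 1 + m' 3 + 2 * m' 4 := by
    rw [← ee2, ← ee2, h]
  obtain ⟨a1, a2, a3, a4, a5, a6⟩ := hm
  obtain ⟨b1, b2, b3, b4, b5, b6⟩ := hm'
  clear h
  have hA : m 0 = 0 ∨ (m 0 = 1 ∧ m 3 = 0 ∧ m 4 = 0 ∧ m 5 = 0) := by
    rcases a3 with h|h
    · exact Or.inl h
    · rcases a4 with h'|h'
      · exact Or.inl h'
      · rcases a5 with h''|h''
        · exact Or.inl h''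
        · rcases Nat.eq_zero_or_pos (m 0) with h0'|h0'
          · exact Or.inl h0'
          · exact Or.inr ⟨by omega, h, h', h''⟩
  have hB : m' 0 = 0 ∨ (m' 0 = 1 ∧ m' 3 = 0 ∧ m' 4 = 0 ∧ m' 5 = 0) := by
    rcases b3 with h|h
    · exact Or.inl h
    · rcases b4 with h'|h'
      · exact Or.inl h'
      · rcases b5 with h''|h''
        · exact Or.inl h''
        · rcases Nat.eq_zero_or_pos (m' 0) with h0'|h0'
          · exact Or.inl h0'
          · exact Or.inr ⟨by omega, h, h', h''⟩
  clear a3 a4 a5 b3 b4 b5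
  have key : m 0 = m' 0 ∧ m 1 = m' 1 ∧ m 2 = m' 2 ∧ m 3 = m' 3 ∧ m 4 = m' 4 ∧ m 5 = m' 5 := by
    rcases hA with hA|hA <;> rcases hB with hB|hB <;> rcases a6 with h6|h6 <;>
      rcases b6 with g6|g6 <;> omega
  obtain ⟨e0, e1, e2, e3, e4, e5⟩ := key
  ext i; fin_cases i <;> assumption

variable {F : Type*} [CommRing F]

lemma toric_eq (i : Fin 6) : toricImages F i = monomial (dd i) 1 := by
  fin_cases i <;> simp [toricImages, dd, X, monomial_mul, monomial_pow] <;> rfl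

lemma aeval_monomial_eq (m : Fin 6 →₀ ℕ) (c : F) :
    aeval (toricImages F) (monomial m c) = monomial (ee m) c := by
  rw [aeval_monomial, Finsupp.prod_fintype _ _ (fun i => pow_zero _), Fin.prod_univ_six]
  simp only [toric_eq, monomial_pow, one_pow, monomial_mul, mul_one, one_mul]
  rw [algebraMap_eq, C_mul_monomial, mul_one, ee]

lemma aeval_eq_mapDomain (p : MvPolynomial (Fin 6) F) :
    aeval (toricImages F) p = AddMonoidAlgebra.mapDomain ee p := by
  induction p using MvPolynomial.induction_on' with
  | monomial m c =>
      rw [aeval_monomial_eq, ← single_eq_monomial]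
      exact (AddMonoidAlgebra.mapDomain_single (f := ee) (a := m) (r := c)).symm
  | add p q hp hq => rw [map_add, hp, hq, AddMonoidAlgebra.mapDomain_add]

/-- The submodule of polynomials supported on normal monomials. -/
noncomputable def NS (F : Type*) [CommRing F] : Submodule F (MvPolynomial (Fin 6) F) :=
  AddMonoidAlgebra.supported F F {m | Nml m}

/-- The rewritten exponent vector. -/
noncomputable def rw6 (m : Fin 6 →₀ ℕ) (i j k l : Fin 6) : Fin 6 →₀ ℕ :=
  m - Finsupp.single i 1 - Finsupp.single j 1 + Finsupp.single k 1 + Finsupp.single l 1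

lemma rw6_apply (m : Fin 6 →₀ ℕ) (i j k l a : Fin 6) :
    rw6 m i j k l a = m a - (if i = a then 1 else 0) - (if j = a then 1 else 0) +
        (if k = a then 1 else 0) + (if l = a then 1 else 0) := by
  simp only [rw6, Finsupp.add_apply, Finsupp.tsub_apply, Finsupp.single_apply]

lemma mul_XX (dm : Fin 6 →₀ ℕ) (i j : Fin 6) :
    monomial dm (1 : F) * (X i * X j) =
      monomial (dm + Finsupp.single i 1 + Finsupp.single j 1) 1 := by
  rw [X, X, ← mul_assoc, monomial_mul, monomial_mul, mul_one, mul_one]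

lemma step_mem (m : Fin 6 →₀ ℕ) (i j k l : Fin 6)
    (h : X i * X j - X k * X l ∈ minorsIdeal F)
    (hle : Finsupp.single i 1 + Finsupp.single j 1 ≤ m) :
    monomial m (1 : F) - monomial (rw6 m i j k l) 1 ∈ minorsIdeal F := by
  have key : m - Finsupp.single i 1 - Finsupp.single j 1 + Finsupp.single i 1 +
      Finsupp.single j 1 = m := by
    rw [tsub_tsub, add_assoc, tsub_add_cancel_of_le hle]
  have e1 : monomial m (1 : F) - monomial (rw6 m i j k l) 1 =
      monomial (m - Finsupp.single i 1 - Finsupp.single j 1) 1 * (X i * X j - X k * X l) := by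
    rw [mul_sub, mul_XX, mul_XX, key, rw6]
  rw [e1]
  exact Ideal.mul_mem_left _ _ h

lemma le_single_pair (m : Fin 6 →₀ ℕ) (i j : Fin 6) (hij : i ≠ j)
    (hi : 1 ≤ m i) (hj : 1 ≤ m j) : Finsupp.single i 1 + Finsupp.single j 1 ≤ m := by
  rw [Finsupp.le_def]
  intro a
  simp only [Finsupp.add_apply, Finsupp.single_apply]
  by_cases hia : i = a
  · subst hia
    have : ¬ (j = i) := fun h => hij h.symm
    simp [this, hi]
  · by_cases hja : j = a
    · subst hja; simp [hia, hj]
    · simp [hia, hja]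

lemma le_single_sq (m : Fin 6 →₀ ℕ) (i : Fin 6) (hi : 2 ≤ m i) :
    Finsupp.single i 1 + Finsupp.single i 1 ≤ m := by
  rw [Finsupp.le_def]
  intro a
  simp only [Finsupp.add_apply, Finsupp.single_apply]
  by_cases hia : i = a
  · subst hia; simpa using hi
  · simp [hia]

lemma gen_AA : (X 0 * X 0 - X 1 * X 2 : MvPolynomial (Fin 6) F) ∈ minorsIdeal F := by
  have : (X 0 ^ 2 - X 1 * X 2 : MvPolynomial (Fin 6) F) ∈ minorsIdeal F :=
    Ideal.subset_span (by simp)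
  rwa [pow_two] at this
lemma gen_AZ : (X 0 * X 5 - X 2 * X 3 : MvPolynomial (Fin 6) F) ∈ minorsIdeal F :=
  Ideal.subset_span (by simp)
lemma gen_AXCY : (X 0 * X 3 - X 2 * X 4 : MvPolynomial (Fin 6) F) ∈ minorsIdeal F :=
  Ideal.subset_span (by simp)
lemma gen_AXBZ : (X 0 * X 3 - X 1 * X 5 : MvPolynomial (Fin 6) F) ∈ minorsIdeal F :=
  Ideal.subset_span (by simp)
lemma gen_AY : (X 0 * X 4 - X 1 * X 3 : MvPolynomial (Fin 6) F) ∈ minorsIdeal F :=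
  Ideal.subset_span (by simp)
lemma gen_XX : (X 3 * X 3 - X 4 * X 5 : MvPolynomial (Fin 6) F) ∈ minorsIdeal F := by
  have : (X 3 ^ 2 - X 4 * X 5 : MvPolynomial (Fin 6) F) ∈ minorsIdeal F :=
    Ideal.subset_span (by simp)
  rwa [pow_two] at this
lemma gen_CY : (X 2 * X 4 - X 1 * X 5 : MvPolynomial (Fin 6) F) ∈ minorsIdeal F := by
  have h := Ideal.sub_mem _ (gen_AXBZ (F := F)) (gen_AXCY (F := F))
  have e : (X 0 * X 3 - X 1 * X 5 : MvPolynomial (Fin 6) F) - (X 0 * X 3 - X 2 * X 4) =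
      X 2 * X 4 - X 1 * X 5 := by ring
  rwa [e] at h

lemma monomial_mem_aux (n : ℕ) :
    ∀ m : Fin 6 →₀ ℕ, 2 * m 0 + m 3 + m 4 ≤ n →
      monomial m (1 : F) ∈ NS F ⊔ (minorsIdeal F).restrictScalars F := by
  induction n with
  | zero =>
      intro m hm
      apply Submodule.mem_sup_left
      rw [NS, AddMonoidAlgebra.mem_supported]
      intro v hv
      rw [Finset.mem_coe] at hv
      have hv' : v = m := by
        simpa using MvPolynomial.support_monomial_subset hv
      subst hv'
      exact ⟨by omega, by omega, Or.inl (by omega), Or.inl (by omega),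
        Or.inl (by omega), Or.inr (by omega)⟩
  | succ n ih =>
      intro m hm
      have step : ∀ (i j k l : Fin 6),
          (X i * X j - X k * X l : MvPolynomial (Fin 6) F) ∈ minorsIdeal F →
          Finsupp.single i 1 + Finsupp.single j 1 ≤ m →
          2 * rw6 m i j k l 0 + rw6 m i j k l 3 + rw6 m i j k l 4 ≤ n →
          monomial m (1 : F) ∈ NS F ⊔ (minorsIdeal F).restrictScalars F := by
        intro i j k l hgen hle hmu
        have h1 := step_mem (F := F) m i j k l hgen hle
        have h2 := ih _ hmu
        have e : monomial m (1 : F) =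
            (monomial m (1 : F) - monomial (rw6 m i j k l) 1) + monomial (rw6 m i j k l) 1 := by
          ring
        rw [e]
        exact Submodule.add_mem _ (Submodule.mem_sup_right
          ((Submodule.restrictScalars_mem _ _ _).2 h1)) h2
      by_cases h03 : 1 ≤ m 0 ∧ 1 ≤ m 3
      · refine step 0 3 1 5 gen_AXBZ (le_single_pair m 0 3 (by decide) h03.1 h03.2) ?_
        simp only [rw6_apply, Fin.reduceEq, reduceIte]; omega
      · by_cases h00 : 2 ≤ m 0
        · refine step 0 0 1 2 gen_AA (le_single_sq m 0 h00) ?_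
          simp only [rw6_apply, Fin.reduceEq, reduceIte]; omega
        · by_cases h04 : 1 ≤ m 0 ∧ 1 ≤ m 4
          · refine step 0 4 1 3 gen_AY (le_single_pair m 0 4 (by decide) h04.1 h04.2) ?_
            simp only [rw6_apply, Fin.reduceEq, reduceIte]; omega
          · by_cases h05 : 1 ≤ m 0 ∧ 1 ≤ m 5
            · refine step 0 5 2 3 gen_AZ (le_single_pair m 0 5 (by decide) h05.1 h05.2) ?_
              simp only [rw6_apply, Fin.reduceEq, reduceIte]; omega
            · by_cases h33 : 2 ≤ m 3
              · refine step 3 3 4 5 gen_XX (le_single_sq m 3 h33) ?_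
                simp only [rw6_apply, Fin.reduceEq, reduceIte]; omega
              · by_cases h24 : 1 ≤ m 2 ∧ 1 ≤ m 4
                · refine step 2 4 1 5 gen_CY (le_single_pair m 2 4 (by decide) h24.1 h24.2) ?_
                  simp only [rw6_apply, Fin.reduceEq, reduceIte]; omega
                · -- m is normal
                  apply Submodule.mem_sup_left
                  rw [NS, AddMonoidAlgebra.mem_supported]
                  intro v hv
                  rw [Finset.mem_coe] at hv
                  have hv' : v = m := by
                    simpa using MvPolynomial.support_monomial_subset hv
                  subst hv'
                  refine ⟨by omega, by omega, by omega, by omega, by omega, by omega⟩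

lemma mem_sup (p : MvPolynomial (Fin 6) F) :
    p ∈ NS F ⊔ (minorsIdeal F).restrictScalars F := by
  conv_rhs => rw [MvPolynomial.as_sum p]
  apply Submodule.sum_mem
  intro v hv
  have : monomial v (coeff v p) = coeff v p • monomial v (1 : F) := by
    rw [MvPolynomial.smul_monomial, smul_eq_mul, mul_one]
  rw [this]
  exact Submodule.smul_mem _ _ (monomial_mem_aux _ v le_rfl)

lemma ns_inj (g : MvPolynomial (Fin 6) F) (hg : g ∈ NS F)
    (h0 : aeval (toricImages F) g = 0) : g = 0 := by
  have hmap : AddMonoidAlgebra.mapDomain ee g = AddMonoidAlgebra.mapDomain ee (0 : MvPolynomial (Fin 6) F) := by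
    rw [AddMonoidAlgebra.mapDomain_zero, ← aeval_eq_mapDomain, h0]
  refine AddMonoidAlgebra.coeff_injective
    (Finsupp.mapDomain_injOn {m | Nml m} ee_inj ?_ ?_ (congrArg AddMonoidAlgebra.coeff hmap))
  · exact AddMonoidAlgebra.mem_supported.1 hg
  · simp

lemma ideal_le_ker :
    minorsIdeal F ≤ RingHom.ker (aeval (R := F) (toricImages F)) := by
  rw [minorsIdeal, Ideal.span_le]
  rintro p hp
  simp only [Set.mem_insert_iff, Set.mem_singleton_iff] at hp
  rcases hp with rfl|rfl|rfl|rfl|rfl|rfl <;>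
    · simp only [SetLike.mem_coe, RingHom.mem_ker, map_sub, map_mul, map_pow, aeval_X,
        show toricImages F 0 = X 0 * X 2 from rfl,
        show toricImages F 1 = X 0 * X 2 ^ 2 from rfl,
        show toricImages F 2 = X 0 from rfl,
        show toricImages F 3 = X 1 * X 2 from rfl,
        show toricImages F 4 = X 1 * X 2 ^ 2 from rfl,
        show toricImages F 5 = X 1 from rfl]
      ring

end ToricAux

open ToricAux in
/-- The `F`-algebra map `F[A,B,C,X,Y,Z] → F[x,y,z]` determined by `A ↦ xz`, `B ↦ xz²`,
`C ↦ x`, `X ↦ yz`, `Y ↦ yz²`, `Z ↦ y` has kernel exactly the ideal of 2×2 minors `ℐ̄`, its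
range is the `F`-subalgebra generated by `x, xz, xz², y, yz, yz²`, and hence it induces an
`F`-algebra isomorphism `𝒮 = F[A,B,C,X,Y,Z]/ℐ̄ ≃ F[x, xz, xz², y, yz, yz²]`. -/
theorem kernel_of_toric_param_eq_minors (ℓ : ℕ) (hℓ : ℓ.Prime) (hℓ2 : 2 < ℓ)
    (F : Type*) [Field F] [Fintype F] [CharP F ℓ] :
    RingHom.ker (MvPolynomial.aeval (R := F) (toricImages F)) = minorsIdeal F ∧
    (MvPolynomial.aeval (R := F) (toricImages F)).range =
      Algebra.adjoin F {X 0, X 0 * X 2, X 0 * X 2 ^ 2, X 1, X 1 * X 2, X 1 * X 2 ^ 2} ∧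
    Nonempty ((MvPolynomial (Fin 6) F ⧸ minorsIdeal F) ≃ₐ[F]
      Algebra.adjoin F
        {X 0, X 0 * X 2, X 0 * X 2 ^ 2, X 1, (X 1 * X 2 : MvPolynomial (Fin 3) F),
         X 1 * X 2 ^ 2}) := by
  have hker : RingHom.ker (MvPolynomial.aeval (R := F) (toricImages F)) = minorsIdeal F := by
    apply le_antisymm
    · intro f hf
      obtain ⟨g, hg, h, hh, rfl⟩ := Submodule.mem_sup.1 (mem_sup f)
      have hgz : aeval (toricImages F) g = 0 := by
        have hh0 : aeval (toricImages F) h = 0 :=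
          ideal_le_ker ((Submodule.restrictScalars_mem _ _ _).1 hh)
        have := hf
        rw [RingHom.mem_ker] at this
        rw [map_add, hh0, add_zero] at this
        exact this
      rw [ns_inj g hg hgz, zero_add]
      exact (Submodule.restrictScalars_mem _ _ _).1 hh
    · exact ideal_le_ker
  have hrange : (MvPolynomial.aeval (R := F) (toricImages F)).range =
      Algebra.adjoin F {X 0, X 0 * X 2, X 0 * X 2 ^ 2, X 1, X 1 * X 2, X 1 * X 2 ^ 2} := by
    rw [← Algebra.adjoin_range_eq_range_aeval]
    congr 1
    have t0 : toricImages F 0 = X 0 * X 2 := rfl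
    have t1 : toricImages F 1 = X 0 * X 2 ^ 2 := rfl
    have t2 : toricImages F 2 = X 0 := rfl
    have t3 : toricImages F 3 = X 1 * X 2 := rfl
    have t4 : toricImages F 4 = X 1 * X 2 ^ 2 := rfl
    have t5 : toricImages F 5 = X 1 := rfl
    ext q
    constructor
    · rintro ⟨i, rfl⟩
      fin_cases i
      · rw [show toricImages F ⟨0, by norm_num⟩ = toricImages F 0 from rfl, t0]; simp
      · rw [show toricImages F ⟨1, by norm_num⟩ = toricImages F 1 from rfl, t1]; simp
      · rw [show toricImages F ⟨2, by norm_num⟩ = toricImages F 2 from rfl, t2]; simp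
      · rw [show toricImages F ⟨3, by norm_num⟩ = toricImages F 3 from rfl, t3]; simp
      · rw [show toricImages F ⟨4, by norm_num⟩ = toricImages F 4 from rfl, t4]; simp
      · rw [show toricImages F ⟨5, by norm_num⟩ = toricImages F 5 from rfl, t5]; simp
    · rintro (rfl|rfl|rfl|rfl|rfl|rfl)
      · exact ⟨2, t2⟩
      · exact ⟨0, t0⟩
      · exact ⟨1, t1⟩
      · exact ⟨5, t5⟩
      · exact ⟨3, t3⟩
      · exact ⟨4, t4⟩
  refine ⟨hker, hrange, ?_⟩
  set φ := MvPolynomial.aeval (R := F) (toricImages F)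
  have e1 : (MvPolynomial (Fin 6) F ⧸ minorsIdeal F) ≃ₐ[F]
      (MvPolynomial (Fin 6) F ⧸ RingHom.ker φ) := Ideal.quotientEquivAlgOfEq F hker.symm
  have e2 : (MvPolynomial (Fin 6) F ⧸ RingHom.ker φ) ≃ₐ[F] (Ideal.kerLiftAlg φ).range :=
    AlgEquiv.ofInjective _ (Ideal.kerLiftAlg_injective φ)
  have hr : (Ideal.kerLiftAlg φ).range = φ.range := by
    ext b
    simp only [AlgHom.mem_range]
    constructor
    · rintro ⟨q, rfl⟩
      obtain ⟨a, rfl⟩ := Ideal.Quotient.mk_surjective q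
      exact ⟨a, (Ideal.kerLiftAlg_mk φ a).symm⟩
    · rintro ⟨a, rfl⟩
      exact ⟨Ideal.Quotient.mk _ a, Ideal.kerLiftAlg_mk φ a⟩
  have e3 : ((Ideal.kerLiftAlg φ).range : Subalgebra F (MvPolynomial (Fin 3) F)) ≃ₐ[F]
      Algebra.adjoin F
        {X 0, X 0 * X 2, X 0 * X 2 ^ 2, X 1, (X 1 * X 2 : MvPolynomial (Fin 3) F),
         X 1 * X 2 ^ 2} :=
    Subalgebra.equivOfEq _ _ (hr.trans hrange)
  exact ⟨(e1.trans e2).trans e3⟩
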